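/- Suppose F ∈ [0, 1) and (1 − 1/γ)·ĥ(ωκ₂(1 − F)/(β₂λ)) > β₂. Then there exists a unique pair (u, v) with u > 0 and 1/γ < v < 1 such that β₂·u·v = ωκ₂(1 − F)/λ and (1 − 1/(γv))·ĥ(u) = β₂. -/

import Mathlib

open Real Set

-- key derivative setup
lemma keyIneq (I : ℝ) (hI : 0 < I) {s : ℝ} (hs : 0 < s) :
    s * (I * Real.exp (-s) / (1 + I * Real.exp (-s))) <
      Real.log ((1 + I) / (1 + I * Real.exp (-s))) := by
  set φ : ℝ → ℝ := fun t =>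
    Real.log ((1 + I) / (1 + I * Real.exp (-t))) -
      t * (I * Real.exp (-t) / (1 + I * Real.exp (-t))) with hφ
  have hA : ∀ t : ℝ, 0 < 1 + I * Real.exp (-t) := fun t => by positivity
  have hderiv : ∀ t : ℝ, HasDerivAt φ
      (t * (I * Real.exp (-t)) / (1 + I * Real.exp (-t))^2) t := by
    intro t
    have he : HasDerivAt (fun t : ℝ => Real.exp (-t)) (-Real.exp (-t)) t := by
      simpa [Function.comp_def] using (Real.hasDerivAt_exp (-t)).comp t (hasDerivAt_neg t)
    have hA' : HasDerivAt (fun t : ℝ => 1 + I * Real.exp (-t)) (I * -Real.exp (-t)) t :=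
      (he.const_mul I).const_add 1
    have hq : HasDerivAt (fun t : ℝ => (1 + I) / (1 + I * Real.exp (-t)))
        ((0 * (1 + I * Real.exp (-t)) - (1 + I) * (I * -Real.exp (-t))) /
          (1 + I * Real.exp (-t))^2) t :=
      (hasDerivAt_const t (1 + I)).div hA' (hA t).ne'
    have hlog : HasDerivAt (fun t : ℝ => Real.log ((1 + I) / (1 + I * Real.exp (-t))))
        (((0 * (1 + I * Real.exp (-t)) - (1 + I) * (I * -Real.exp (-t))) /
          (1 + I * Real.exp (-t))^2) / ((1 + I) / (1 + I * Real.exp (-t)))) t := by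
      apply hq.log
      positivity
    have hf : HasDerivAt (fun t : ℝ => t * (I * Real.exp (-t) / (1 + I * Real.exp (-t))))
        (1 * (I * Real.exp (-t) / (1 + I * Real.exp (-t))) +
          t * (((I * -Real.exp (-t)) * (1 + I * Real.exp (-t)) -
            (I * Real.exp (-t)) * (I * -Real.exp (-t))) / (1 + I * Real.exp (-t))^2)) t := by
      exact (hasDerivAt_id t).mul (((he.const_mul I).div hA' (hA t).ne'))
    have := hlog.sub hf
    refine this.congr_deriv ?_
    have hAt := (hA t).ne'
    have hIpos : (0:ℝ) < 1 + I := by linarith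
    field_simp
    ring
  have hmono : StrictMonoOn φ (Set.Ici 0) := by
    apply strictMonoOn_of_deriv_pos (convex_Ici 0)
    · exact fun t _ => ((hderiv t).differentiableAt.continuousAt).continuousWithinAt
    · intro t ht
      rw [interior_Ici] at ht
      rw [(hderiv t).deriv]
      have ht' : 0 < t := ht
      have h1 := hA t
      have h2 : 0 < Real.exp (-t) := Real.exp_pos _
      positivity
  have h0 : φ 0 = 0 := by
    have h1 : (0:ℝ) < 1 + I := by linarith
    simp [hφ, div_self h1.ne']
  have hmem0 : (0:ℝ) ∈ Set.Ici (0:ℝ) := Set.self_mem_Ici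
  have hmems : s ∈ Set.Ici (0:ℝ) := Set.mem_Ici.2 hs.le
  have hlt := hmono hmem0 hmems hs
  rw [h0] at hlt
  have : 0 < Real.log ((1 + I) / (1 + I * Real.exp (-s))) -
      s * (I * Real.exp (-s) / (1 + I * Real.exp (-s))) := hlt
  linarith

lemma H_hasDerivAt (I : ℝ) (hI : 0 < I) {s : ℝ} (hs : 0 < s) :
    HasDerivAt (fun s : ℝ => s⁻¹ * Real.log ((1 + I) / (1 + I * Real.exp (-s))))
      (-(s^2)⁻¹ * Real.log ((1 + I) / (1 + I * Real.exp (-s))) +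
        s⁻¹ * (I * Real.exp (-s) / (1 + I * Real.exp (-s)))) s := by
  have hA : ∀ t : ℝ, 0 < 1 + I * Real.exp (-t) := fun t => by positivity
  have he : HasDerivAt (fun t : ℝ => Real.exp (-t)) (-Real.exp (-s)) s := by
    simpa [Function.comp_def] using (Real.hasDerivAt_exp (-s)).comp s (hasDerivAt_neg s)
  have hA' : HasDerivAt (fun t : ℝ => 1 + I * Real.exp (-t)) (I * -Real.exp (-s)) s :=
    (he.const_mul I).const_add 1
  have hq : HasDerivAt (fun t : ℝ => (1 + I) / (1 + I * Real.exp (-t)))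
      ((0 * (1 + I * Real.exp (-s)) - (1 + I) * (I * -Real.exp (-s))) /
        (1 + I * Real.exp (-s))^2) s :=
    (hasDerivAt_const s (1 + I)).div hA' (hA s).ne'
  have hlog : HasDerivAt (fun t : ℝ => Real.log ((1 + I) / (1 + I * Real.exp (-t))))
      (((0 * (1 + I * Real.exp (-s)) - (1 + I) * (I * -Real.exp (-s))) /
        (1 + I * Real.exp (-s))^2) / ((1 + I) / (1 + I * Real.exp (-s)))) s := by
    apply hq.log; positivity
  have hinv : HasDerivAt (fun t : ℝ => t⁻¹) (-(s^2)⁻¹) s := by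
    simpa using hasDerivAt_inv hs.ne'
  have := hinv.mul hlog
  refine this.congr_deriv ?_
  have hAs := (hA s).ne'
  have hIpos : (0:ℝ) < 1 + I := by linarith
  field_simp
  ring

lemma H_anti (I : ℝ) (hI : 0 < I) : StrictAntiOn
    (fun s : ℝ => s⁻¹ * Real.log ((1 + I) / (1 + I * Real.exp (-s)))) (Set.Ioi 0) := by
  apply strictAntiOn_of_deriv_neg (convex_Ioi 0)
  · exact fun t ht =>
      ((H_hasDerivAt I hI ht).differentiableAt.continuousAt).continuousWithinAt
  · intro t ht
    rw [interior_Ioi] at ht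
    have ht' : (0:ℝ) < t := ht
    rw [(H_hasDerivAt I hI ht').deriv]
    have hk := keyIneq I hI ht'
    have hA : (0:ℝ) < 1 + I * Real.exp (-t) := by positivity
    have h2 : (0:ℝ) < t^2 := by positivity
    set L := Real.log ((1 + I) / (1 + I * Real.exp (-t)))
    set f := I * Real.exp (-t) / (1 + I * Real.exp (-t))
    have heq : -(t^2)⁻¹ * L + t⁻¹ * f = (t * f) * (t^2)⁻¹ - L * (t^2)⁻¹ := by
      field_simp; ring
    rw [heq]
    have := mul_lt_mul_of_pos_right hk (inv_pos.2 h2)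
    linarith

lemma H_pos (I : ℝ) (hI : 0 < I) {s : ℝ} (hs : 0 < s) :
    0 < s⁻¹ * Real.log ((1 + I) / (1 + I * Real.exp (-s))) := by
  have hA : (0:ℝ) < 1 + I * Real.exp (-s) := by positivity
  have hexp : Real.exp (-s) < 1 := Real.exp_lt_one_iff.2 (by linarith)
  have hlt : 1 + I * Real.exp (-s) < 1 + I := by nlinarith
  have hlog : 0 < Real.log ((1 + I) / (1 + I * Real.exp (-s))) :=
    Real.log_pos ((one_lt_div hA).2 hlt)
  positivity

/-- The nondimensional light-dependent growth function
`ĥ(u) = (1/(u + k₁)) · log((1 + I)/(1 + I·exp(−(u + k₁))))`. -/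
noncomputable def hhat (k₁ I u : ℝ) : ℝ :=
  (1 / (u + k₁)) * Real.log ((1 + I) / (1 + I * Real.exp (-(u + k₁))))

/-- Existence and uniqueness of the positive solution of the reduced quasi-steady-state
algebraic system of the single-lake phosphorus model. -/
theorem stmt_3 (k₁ I ω κ₂ lam β₂ γ F : ℝ)
    (hk₁ : 0 < k₁) (hI : 0 < I) (hω : 0 < ω) (hκ₂ : 0 < κ₂) (hlam : 0 < lam)
    (hβ₂ : 0 < β₂) (hγ : 1 < γ) (hF : F ∈ Set.Ico (0 : ℝ) 1)
    (hcond : (1 - 1 / γ) * hhat k₁ I (ω * κ₂ * (1 - F) / (β₂ * lam)) > β₂) :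
    ∃! uv : ℝ × ℝ, 0 < uv.1 ∧ 1 / γ < uv.2 ∧ uv.2 < 1 ∧
      β₂ * uv.1 * uv.2 = ω * κ₂ * (1 - F) / lam ∧
      (1 - 1 / (γ * uv.2)) * hhat k₁ I uv.1 = β₂ := by
  obtain ⟨hF0, hF1⟩ := hF
  have hγ0 : (0:ℝ) < γ := by linarith
  set C := ω * κ₂ * (1 - F) / (β₂ * lam) with hC
  have hCpos : 0 < C := by
    have h1 : (0:ℝ) < 1 - F := by linarith
    rw [hC]; positivity
  have hrhs : ω * κ₂ * (1 - F) / lam = β₂ * C := by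
    rw [hC]; field_simp
  clear_value C
  have hCle : C ≤ γ * C := by nlinarith
  have hhat_eq : ∀ u : ℝ, hhat k₁ I u =
      (fun s : ℝ => s⁻¹ * Real.log ((1 + I) / (1 + I * Real.exp (-s)))) (u + k₁) := by
    intro u; simp [hhat, one_div]
  have hhat_pos : ∀ u : ℝ, 0 ≤ u → 0 < hhat k₁ I u := by
    intro u hu; rw [hhat_eq]; exact H_pos I hI (by linarith)
  have hhat_anti : ∀ a b : ℝ, 0 ≤ a → a < b → hhat k₁ I b < hhat k₁ I a := by
    intro a b ha hab
    rw [hhat_eq, hhat_eq]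
    exact H_anti I hI (Set.mem_Ioi.2 (by linarith)) (Set.mem_Ioi.2 (by linarith))
      (by linarith)
  set g : ℝ → ℝ := fun u => (1 - u / (γ * C)) * hhat k₁ I u with hg
  have ganti : StrictAntiOn g (Set.Icc C (γ * C)) := by
    intro a ha b hb hab
    have ha0 : 0 < a := lt_of_lt_of_le hCpos ha.1
    have hb0 : 0 < b := lt_trans ha0 hab
    have hhb : 0 < hhat k₁ I b := hhat_pos b hb0.le
    have hhab : hhat k₁ I b < hhat k₁ I a := hhat_anti a b ha0.le hab
    have hγC : 0 < γ * C := by positivity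
    have h1 : 0 ≤ 1 - b / (γ * C) := by
      rw [sub_nonneg, div_le_one hγC]; exact hb.2
    have h2 : 1 - b / (γ * C) < 1 - a / (γ * C) := by
      have := div_lt_div_of_pos_right hab hγC
      linarith
    show (1 - b / (γ * C)) * hhat k₁ I b < (1 - a / (γ * C)) * hhat k₁ I a
    nlinarith
  have gcont : ContinuousOn g (Set.Icc C (γ * C)) := by
    intro u hu
    have hu0 : 0 < u := lt_of_lt_of_le hCpos hu.1
    have hs : 0 < u + k₁ := by linarith
    have hHc : ContinuousAt (hhat k₁ I) u := by
      have hadd : ContinuousAt (fun u : ℝ => u + k₁) u := by fun_prop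
      have := ContinuousAt.comp
        (g := fun s : ℝ => s⁻¹ * Real.log ((1 + I) / (1 + I * Real.exp (-s))))
        (f := fun u : ℝ => u + k₁) (x := u)
        ((H_hasDerivAt I hI hs).differentiableAt.continuousAt) hadd
      have heq : hhat k₁ I = fun u : ℝ =>
          (fun s : ℝ => s⁻¹ * Real.log ((1 + I) / (1 + I * Real.exp (-s)))) (u + k₁) := by
        funext u; exact hhat_eq u
      rw [heq]; exact this
    exact (((continuousAt_const.sub (continuousAt_id.div continuousAt_const
      (by positivity))).mul hHc)).continuousWithinAt
  have hgC : g C = (1 - 1 / γ) * hhat k₁ I C := by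
    have h1 : C / (γ * C) = 1 / γ := by field_simp
    rw [hg]; simp only [h1]
  have hgγC : g (γ * C) = 0 := by
    have h1 : γ * C / (γ * C) = 1 := div_self (by positivity)
    simp [hg, h1]
  have hmem : β₂ ∈ Set.Icc (g (γ * C)) (g C) := by
    constructor
    · rw [hgγC]; exact hβ₂.le
    · rw [hgC]; exact hcond.le
  obtain ⟨u₀, hu₀mem, hu₀⟩ := intermediate_value_Icc' hCle gcont hmem
  have hu₀C : C < u₀ := by
    rcases lt_or_eq_of_le hu₀mem.1 with h | h
    · exact h
    · exfalso; rw [← h, hgC] at hu₀; linarith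
  have hu₀γC : u₀ < γ * C := by
    rcases lt_or_eq_of_le hu₀mem.2 with h | h
    · exact h
    · exfalso; rw [h, hgγC] at hu₀; linarith
  have hu₀0 : 0 < u₀ := lt_trans hCpos hu₀C
  refine ⟨(u₀, C / u₀), ⟨hu₀0, ?_, ?_, ?_, ?_⟩, ?_⟩
  · show 1 / γ < C / u₀
    rw [div_lt_div_iff₀ hγ0 hu₀0]
    linarith
  · show C / u₀ < 1
    rw [div_lt_one hu₀0]; exact hu₀C
  · show β₂ * u₀ * (C / u₀) = ω * κ₂ * (1 - F) / lam
    rw [hrhs]; field_simp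
  · show (1 - 1 / (γ * (C / u₀))) * hhat k₁ I u₀ = β₂
    have h1 : 1 / (γ * (C / u₀)) = u₀ / (γ * C) := by
      rw [div_eq_div_iff (by positivity) (by positivity)]
      field_simp
    rw [h1]; exact hu₀
  · rintro ⟨u, v⟩ ⟨hu, hv1, hv2, heq1, heq2⟩
    simp only at hu hv1 hv2 heq1 heq2
    rw [hrhs] at heq1
    have huv : u * v = C := by
      have h1 : β₂ * (u * v) = β₂ * C := by linear_combination heq1
      exact mul_left_cancel₀ hβ₂.ne' h1
    have hv0 : 0 < v := by
      have : (0:ℝ) < 1 / γ := by positivity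
      linarith
    have hvC : v = C / u := by
      rw [eq_div_iff hu.ne']; linear_combination huv
    have huC : C < u := by nlinarith [mul_lt_mul_of_pos_left hv2 hu]
    have huγC : u < γ * C := by
      have h1 : u * (1 / γ) < u * v := mul_lt_mul_of_pos_left hv1 hu
      rw [huv] at h1
      have h3 : γ * (u * (1 / γ)) = u := by field_simp
      nlinarith [mul_lt_mul_of_pos_left h1 hγ0]
    have hgu : g u = β₂ := by
      have h1 : 1 / (γ * v) = u / (γ * C) := by
        rw [hvC, div_eq_div_iff (by positivity) (by positivity)]
        field_simp
      show (1 - u / (γ * C)) * hhat k₁ I u = β₂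
      rw [← h1]; exact heq2
    have huu : u = u₀ := ganti.injOn ⟨huC.le, huγC.le⟩ ⟨hu₀C.le, hu₀γC.le⟩
      (by rw [hgu, hu₀])
    subst huu
    simp [hvC]
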